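/- (Uniqueness part of the fundamental theorem of surface theory.) Let U ⊆ ℝ² be a connected open set and r₁, r₂ : U → ℝ³ two smooth immersed parametrized surfaces whose first fundamental form coefficients E, F, G and second fundamental form coefficients L, M, N (computed with the normals n_i = (∂_u r_i × ∂_v r_i)/|∂_u r_i × ∂_v r_i|) agree at every point of U. Then r₂ is congruent to r₁: there exist A ∈ SO(3) and b ∈ ℝ³ with r₂(p) = A · r₁(p) + b for all p ∈ U. -/

import Mathlib

noncomputable section

/-- Euclidean dot product on `ℝ³`. -/
def dot3 (x y : Fin 3 → ℝ) : ℝ := ∑ i, x i * y i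

/-- Partial derivative with respect to the first coordinate `u`. -/
def pdu {E : Type*} [NormedAddCommGroup E] [NormedSpace ℝ E]
    (f : ℝ × ℝ → E) (p : ℝ × ℝ) : E := fderiv ℝ f p (1, 0)

/-- Partial derivative with respect to the second coordinate `v`. -/
def pdv {E : Type*} [NormedAddCommGroup E] [NormedSpace ℝ E]
    (f : ℝ × ℝ → E) (p : ℝ × ℝ) : E := fderiv ℝ f p (0, 1)

variable (r : ℝ × ℝ → Fin 3 → ℝ)

/-- Coefficient `E = ⟨r_u, r_u⟩` of the first fundamental form. -/
def Ec (p : ℝ × ℝ) : ℝ := dot3 (pdu r p) (pdu r p)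

/-- Coefficient `F = ⟨r_u, r_v⟩` of the first fundamental form. -/
def Fc (p : ℝ × ℝ) : ℝ := dot3 (pdu r p) (pdv r p)

/-- Coefficient `G = ⟨r_v, r_v⟩` of the first fundamental form. -/
def Gc (p : ℝ × ℝ) : ℝ := dot3 (pdv r p) (pdv r p)

/-- `W = √(EG − F²)`. -/
def Wc (p : ℝ × ℝ) : ℝ := Real.sqrt (Ec r p * Gc r p - Fc r p ^ 2)

/-- Unit normal `n = (r_u × r_v)/W`. -/
def nc (p : ℝ × ℝ) : Fin 3 → ℝ := (Wc r p)⁻¹ • (crossProduct (pdu r p) (pdv r p))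

/-- Coefficient `L = ⟨r_uu, n⟩` of the second fundamental form. -/
def Lc (p : ℝ × ℝ) : ℝ := dot3 (pdu (pdu r) p) (nc r p)

/-- Coefficient `M = ⟨r_uv, n⟩` of the second fundamental form. -/
def Mc (p : ℝ × ℝ) : ℝ := dot3 (pdv (pdu r) p) (nc r p)

/-- Coefficient `N = ⟨r_vv, n⟩` of the second fundamental form. -/
def Nc (p : ℝ × ℝ) : ℝ := dot3 (pdv (pdv r) p) (nc r p)

/-- Christoffel symbol `Γ¹₁₁`. -/
def Γ111 (p : ℝ × ℝ) : ℝ :=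
  (Gc r p * pdu (Ec r) p - 2 * Fc r p * pdu (Fc r) p + Fc r p * pdv (Ec r) p) /
    (2 * Wc r p ^ 2)

/-- Christoffel symbol `Γ²₁₁`. -/
def Γ211 (p : ℝ × ℝ) : ℝ :=
  (2 * Ec r p * pdu (Fc r) p - Ec r p * pdv (Ec r) p - Fc r p * pdu (Ec r) p) /
    (2 * Wc r p ^ 2)

/-- Christoffel symbol `Γ¹₁₂`. -/
def Γ112 (p : ℝ × ℝ) : ℝ :=
  (Gc r p * pdv (Ec r) p - Fc r p * pdu (Gc r) p) / (2 * Wc r p ^ 2)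

/-- Christoffel symbol `Γ²₁₂`. -/
def Γ212 (p : ℝ × ℝ) : ℝ :=
  (Ec r p * pdu (Gc r) p - Fc r p * pdv (Ec r) p) / (2 * Wc r p ^ 2)

/-- Christoffel symbol `Γ¹₂₂`. -/
def Γ122 (p : ℝ × ℝ) : ℝ :=
  (2 * Gc r p * pdv (Fc r) p - Gc r p * pdu (Gc r) p - Fc r p * pdv (Gc r) p) /
    (2 * Wc r p ^ 2)

/-- Christoffel symbol `Γ²₂₂`. -/
def Γ222 (p : ℝ × ℝ) : ℝ :=
  (Ec r p * pdv (Gc r) p - 2 * Fc r p * pdv (Fc r) p + Fc r p * pdu (Gc r) p) /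
    (2 * Wc r p ^ 2)

/-- `Δ = L/√(EG − F²)`. -/
def Δ0 (p : ℝ × ℝ) : ℝ := Lc r p / Wc r p

/-- `Δ' = M/√(EG − F²)`. -/
def Δ1 (p : ℝ × ℝ) : ℝ := Mc r p / Wc r p

/-- `Δ'' = N/√(EG − F²)`. -/
def Δ2 (p : ℝ × ℝ) : ℝ := Nc r p / Wc r p

namespace FTS


variable {E F G : Type*} [NormedAddCommGroup E] [NormedSpace ℝ E]
  [NormedAddCommGroup F] [NormedSpace ℝ F] [NormedAddCommGroup G] [NormedSpace ℝ G]

/-- generic directional partial derivative -/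
def pd (w : ℝ × ℝ) (f : ℝ × ℝ → E) (p : ℝ × ℝ) : E := fderiv ℝ f p w

lemma pdu_eq (f : ℝ × ℝ → E) : pdu f = pd (1,0) f := rfl
lemma pdv_eq (f : ℝ × ℝ → E) : pdv f = pd (0,1) f := rfl

lemma pd_clm (w : ℝ × ℝ) (φ : E →L[ℝ] F) {f : ℝ × ℝ → E} {p : ℝ × ℝ}
    (hf : DifferentiableAt ℝ f p) :
    pd w (fun q => φ (f q)) p = φ (pd w f p) := by
  have : fderiv ℝ (fun q => φ (f q)) p = φ.comp (fderiv ℝ f p) :=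
    (φ.hasFDerivAt.comp p hf.hasFDerivAt).fderiv
  simp [pd, this]

lemma pd_add (w : ℝ × ℝ) {f g : ℝ × ℝ → E} {p : ℝ × ℝ}
    (hf : DifferentiableAt ℝ f p) (hg : DifferentiableAt ℝ g p) :
    pd w (fun q => f q + g q) p = pd w f p + pd w g p := by
  simp [pd, fderiv_fun_add hf hg]

lemma pd_sub (w : ℝ × ℝ) {f g : ℝ × ℝ → E} {p : ℝ × ℝ}
    (hf : DifferentiableAt ℝ f p) (hg : DifferentiableAt ℝ g p) :
    pd w (fun q => f q - g q) p = pd w f p - pd w g p := by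
  simp [pd, fderiv_fun_sub hf hg]

lemma pd_mul (w : ℝ × ℝ) {f g : ℝ × ℝ → ℝ} {p : ℝ × ℝ}
    (hf : DifferentiableAt ℝ f p) (hg : DifferentiableAt ℝ g p) :
    pd w (fun q => f q * g q) p = pd w f p * g p + f p * pd w g p := by
  simp [pd, fderiv_fun_mul hf hg]; ring

/-- component of pd of a vector-valued map -/
lemma pd_apply (w : ℝ × ℝ) {f : ℝ × ℝ → Fin 3 → ℝ} {p : ℝ × ℝ} (i : Fin 3)
    (hf : DifferentiableAt ℝ f p) :
    pd w f p i = pd w (fun q => f q i) p := by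
  have := pd_clm w (ContinuousLinearMap.proj (R := ℝ) (φ := fun _ : Fin 3 => ℝ) i) hf
  simpa using this.symm

lemma diffAt_apply {f : ℝ × ℝ → Fin 3 → ℝ} {p : ℝ × ℝ} (i : Fin 3)
    (hf : DifferentiableAt ℝ f p) : DifferentiableAt ℝ (fun q => f q i) p := by
  exact ((ContinuousLinearMap.proj (R := ℝ) (φ := fun _ : Fin 3 => ℝ) i).differentiableAt).comp p hf

lemma diffAt_dot3 {f g : ℝ × ℝ → Fin 3 → ℝ} {p : ℝ × ℝ}
    (hf : DifferentiableAt ℝ f p) (hg : DifferentiableAt ℝ g p) :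
    DifferentiableAt ℝ (fun q => dot3 (f q) (g q)) p := by
  simp only [dot3]
  exact DifferentiableAt.fun_sum fun i _ => (diffAt_apply i hf).mul (diffAt_apply i hg)

lemma pd_dot3 (w : ℝ × ℝ) {f g : ℝ × ℝ → Fin 3 → ℝ} {p : ℝ × ℝ}
    (hf : DifferentiableAt ℝ f p) (hg : DifferentiableAt ℝ g p) :
    pd w (fun q => dot3 (f q) (g q)) p = dot3 (pd w f p) (g p) + dot3 (f p) (pd w g p) := by
  simp only [dot3]
  rw [show (fun q => ∑ i, f q i * g q i) = fun q => ∑ i ∈ Finset.univ, f q i * g q i from rfl]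
  rw [show pd w (fun q => ∑ i ∈ Finset.univ, f q i * g q i) p
      = ∑ i ∈ Finset.univ, pd w (fun q => f q i * g q i) p from by
    rw [pd, fderiv_fun_sum (fun i _ => (diffAt_apply i hf).fun_mul (diffAt_apply i hg)), ContinuousLinearMap.sum_apply]; rfl]
  rw [← Finset.sum_add_distrib]
  refine Finset.sum_congr rfl fun i _ => ?_
  rw [pd_mul w (diffAt_apply i hf) (diffAt_apply i hg),
    pd_apply w i hf, pd_apply w i hg]

lemma dot3_comm (x y : Fin 3 → ℝ) : dot3 x y = dot3 y x := by
  simp [dot3, mul_comm]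

lemma dot3_nonneg (x : Fin 3 → ℝ) : 0 ≤ dot3 x x :=
  Finset.sum_nonneg fun i _ => mul_self_nonneg _

lemma dot3_pos {x : Fin 3 → ℝ} (hx : x ≠ 0) : 0 < dot3 x x := by
  rcases (dot3_nonneg x).lt_or_eq with h | h
  · exact h
  · exfalso; apply hx
    have h0 : ∀ i ∈ Finset.univ, x i * x i = 0 := by
      intro i _
      have := (Finset.sum_eq_zero_iff_of_nonneg (fun i _ => mul_self_nonneg (x i))).1 h.symm
      exact this i (Finset.mem_univ i)
    funext i
    have := h0 i (Finset.mem_univ i)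
    exact mul_self_eq_zero.1 this

/-- key constancy lemma -/
lemma const_of_pd_zero {U : Set (ℝ × ℝ)} (hU : IsOpen U) (hconn : IsPreconnected U)
    {f : ℝ × ℝ → E} (hd : ∀ p ∈ U, DifferentiableAt ℝ f p)
    (hz : ∀ p ∈ U, fderiv ℝ f p = 0) :
    ∀ x ∈ U, ∀ y ∈ U, f x = f y := by
  have hloc : ∀ p ∈ U, ∃ ε > 0, Metric.ball p ε ⊆ U ∧
      ∀ q ∈ Metric.ball p ε, f q = f p := by
    intro p hp
    obtain ⟨ε, hε, hball⟩ := Metric.isOpen_iff.1 hU p hp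
    refine ⟨ε, hε, hball, fun q hq => ?_⟩
    refine (convex_ball p ε).is_const_of_fderivWithin_eq_zero
      (fun z hz' => (hd z (hball hz')).differentiableWithinAt) ?_ hq (Metric.mem_ball_self hε)
    intro z hz'
    rw [fderivWithin_of_isOpen Metric.isOpen_ball hz']
    exact hz z (hball hz')
  intro x hx y hy
  set u : Set (ℝ × ℝ) := {p | p ∈ U ∧ f p = f y} with hu_def
  set v : Set (ℝ × ℝ) := {p | p ∈ U ∧ f p ≠ f y} with hv_def
  have hu : IsOpen u := by
    rw [Metric.isOpen_iff]
    rintro p ⟨hpU, hpf⟩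
    obtain ⟨ε, hε, hball, hconst⟩ := hloc p hpU
    exact ⟨ε, hε, fun q hq => ⟨hball hq, (hconst q hq).trans hpf⟩⟩
  have hv : IsOpen v := by
    rw [Metric.isOpen_iff]
    rintro p ⟨hpU, hpf⟩
    obtain ⟨ε, hε, hball, hconst⟩ := hloc p hpU
    exact ⟨ε, hε, fun q hq => ⟨hball hq, by rw [hconst q hq]; exact hpf⟩⟩
  have hcover : U ⊆ u ∪ v := by
    intro p hp
    by_cases h : f p = f y
    · exact Or.inl ⟨hp, h⟩
    · exact Or.inr ⟨hp, h⟩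
  have hdisj : Disjoint u v := by
    rw [Set.disjoint_iff]
    rintro p ⟨⟨_, h1⟩, ⟨_, h2⟩⟩
    exact absurd h1 h2
  rcases hconn.subset_or_subset hu hv hdisj hcover with h | h
  · exact ((h hx).2).trans ((h hy).2).symm
  · exact absurd ((h hy).2) (by simp)


end FTS

namespace FTS
open Matrix

variable {U : Set (ℝ × ℝ)} {r : ℝ × ℝ → Fin 3 → ℝ}

section Smooth
variable (hU : IsOpen U) (hr : ContDiffOn ℝ (⊤ : ℕ∞) r U)
include hU hr

lemma contDiffOn_pd (w : ℝ × ℝ) : ContDiffOn ℝ (⊤ : ℕ∞) (pd w r) U := by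
  have h1 : ContDiffOn ℝ (⊤ : ℕ∞) (fderiv ℝ r) U :=
    hr.fderiv_of_isOpen hU (m := (⊤:ℕ∞)) (by simp)
  exact h1.clm_apply contDiffOn_const

lemma diffAt_pd (w : ℝ × ℝ) {p : ℝ × ℝ} (hp : p ∈ U) :
    DifferentiableAt ℝ (pd w r) p :=
  ((contDiffOn_pd hU hr w).differentiableOn (by simp)).differentiableAt
    (hU.mem_nhds hp)

lemma diffAt_of_contDiffOn {p : ℝ × ℝ} (hp : p ∈ U) : DifferentiableAt ℝ r p :=
  (hr.differentiableOn (by simp)).differentiableAt (hU.mem_nhds hp)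

/-- symmetry of second partials -/
lemma pd_symm {p : ℝ × ℝ} (hp : p ∈ U) :
    pdu (pdv r) p = pdv (pdu r) p := by
  have hf' : DifferentiableAt ℝ (fderiv ℝ r) p :=
    ((hr.fderiv_of_isOpen hU (m := (⊤:ℕ∞)) (by simp)).differentiableOn
      (by simp)).differentiableAt (hU.mem_nhds hp)
  have hev : ∀ᶠ y in nhds p, HasFDerivAt r (fderiv ℝ r y) y := by
    filter_upwards [hU.mem_nhds hp] with y hy
    exact (diffAt_of_contDiffOn hU hr hy).hasFDerivAt
  have hsymm := second_derivative_symmetric_of_eventually hev hf'.hasFDerivAt (1,0) (0,1)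
  have e1 : pdu (pdv r) p = fderiv ℝ (fderiv ℝ r) p (1,0) (0,1) := by
    have : pdv r = fun q => (ContinuousLinearMap.apply ℝ (Fin 3 → ℝ) ((0:ℝ),(1:ℝ)))
        (fderiv ℝ r q) := rfl
    rw [pdu_eq, this, pd_clm _ _ hf']
    rfl
  have e2 : pdv (pdu r) p = fderiv ℝ (fderiv ℝ r) p (0,1) (1,0) := by
    have : pdu r = fun q => (ContinuousLinearMap.apply ℝ (Fin 3 → ℝ) ((1:ℝ),(0:ℝ)))
        (fderiv ℝ r q) := rfl
    rw [pdv_eq, this, pd_clm _ _ hf']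
    rfl
  rw [e1, e2, hsymm]

end Smooth
end FTS

namespace FTS
open Matrix

lemma dot3_eq_dotProduct (x y : Fin 3 → ℝ) : dot3 x y = x ⬝ᵥ y := rfl

lemma dot3_smul_left (c : ℝ) (x y : Fin 3 → ℝ) : dot3 (c • x) y = c * dot3 x y := by
  simp only [dot3, Pi.smul_apply, smul_eq_mul, Finset.mul_sum]
  exact Finset.sum_congr rfl fun i _ => by ring

lemma dot3_cross_left (a b : Fin 3 → ℝ) : dot3 (crossProduct a b) a = 0 := by
  simp [dot3, cross_apply, Fin.sum_univ_three]; ring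

lemma dot3_cross_right (a b : Fin 3 → ℝ) : dot3 (crossProduct a b) b = 0 := by
  simp [dot3, cross_apply, Fin.sum_univ_three]; ring

lemma dot3_cross_cross (a b : Fin 3 → ℝ) :
    dot3 (crossProduct a b) (crossProduct a b) = dot3 a a * dot3 b b - dot3 a b ^ 2 := by
  simp [dot3, cross_apply, Fin.sum_univ_three]; ring

variable {U : Set (ℝ × ℝ)} {r : ℝ × ℝ → Fin 3 → ℝ}

/-- strict Cauchy–Schwarz from linear independence -/
lemma EG_sub_sq_pos {p : ℝ × ℝ} (hind : LinearIndependent ℝ ![pdu r p, pdv r p]) :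
    0 < Ec r p * Gc r p - Fc r p ^ 2 := by
  set a := pdu r p with ha
  set b := pdv r p with hb
  obtain ⟨hb0, hnp⟩ := linearIndependent_fin2.1 (by simpa using hind)
  have ha0 : a ≠ 0 := by
    intro h
    exact hnp 0 (by simp [h])
  have hE : 0 < dot3 a a := dot3_pos ha0
  set z : Fin 3 → ℝ := fun i => dot3 a a * b i - dot3 a b * a i with hz
  have hzz : dot3 z z = dot3 a a * (dot3 a a * dot3 b b - dot3 a b ^ 2) := by
    simp [dot3, hz, Fin.sum_univ_three]; ring
  have hnn : 0 ≤ dot3 a a * dot3 b b - dot3 a b ^ 2 := by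
    nlinarith [dot3_nonneg z, hzz]
  rcases hnn.lt_or_eq with h | h
  · exact h
  · exfalso
    have hz0 : z = 0 := by
      by_contra hzne
      have := dot3_pos hzne
      rw [hzz, ← h] at this
      simp at this
    by_cases hF : dot3 a b = 0
    · apply hb0
      funext i
      have := congrFun hz0 i
      simp [hz, hF] at this
      rcases this with h' | h'
      · exact absurd h' hE.ne'
      · exact h'
    · apply hnp (dot3 a a / dot3 a b)
      funext i
      have := congrFun hz0 i
      simp [hz, sub_eq_zero] at this
      simp only [Matrix.cons_val_one, Matrix.cons_val_zero, Pi.smul_apply, smul_eq_mul]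
      field_simp
      linarith [this]
  
lemma Wc_pos {p : ℝ × ℝ} (hind : LinearIndependent ℝ ![pdu r p, pdv r p]) :
    0 < Wc r p := Real.sqrt_pos.2 (EG_sub_sq_pos hind)

lemma Wc_sq {p : ℝ × ℝ} (hind : LinearIndependent ℝ ![pdu r p, pdv r p]) :
    Wc r p ^ 2 = Ec r p * Gc r p - Fc r p ^ 2 :=
  Real.sq_sqrt (EG_sub_sq_pos hind).le

lemma dot3_nc_pdu (p : ℝ × ℝ) : dot3 (nc r p) (pdu r p) = 0 := by
  rw [nc, dot3_smul_left, dot3_cross_left, mul_zero]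

lemma dot3_nc_pdv (p : ℝ × ℝ) : dot3 (nc r p) (pdv r p) = 0 := by
  rw [nc, dot3_smul_left, dot3_cross_right, mul_zero]

lemma dot3_nc_nc {p : ℝ × ℝ} (hind : LinearIndependent ℝ ![pdu r p, pdv r p]) :
    dot3 (nc r p) (nc r p) = 1 := by
  rw [nc, dot3_smul_left, dot3_comm, dot3_smul_left, dot3_cross_cross]
  have h1 := Wc_sq hind
  have h2 := (Wc_pos hind).ne'
  rw [Ec, Gc, Fc] at h1
  rw [← h1]
  field_simp

end FTS

namespace FTS
open Matrix

variable {U : Set (ℝ × ℝ)} {r : ℝ × ℝ → Fin 3 → ℝ}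

section Diff
variable (hU : IsOpen U) (hr : ContDiffOn ℝ (⊤ : ℕ∞) r U)
  (hind : ∀ p ∈ U, LinearIndependent ℝ ![pdu r p, pdv r p])
include hU hr

lemma diffAt_Ec {p : ℝ × ℝ} (hp : p ∈ U) : DifferentiableAt ℝ (Ec r) p :=
  diffAt_dot3 (diffAt_pd hU hr _ hp) (diffAt_pd hU hr _ hp)

lemma diffAt_Fc {p : ℝ × ℝ} (hp : p ∈ U) : DifferentiableAt ℝ (Fc r) p :=
  diffAt_dot3 (diffAt_pd hU hr _ hp) (diffAt_pd hU hr _ hp)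

lemma diffAt_Gc {p : ℝ × ℝ} (hp : p ∈ U) : DifferentiableAt ℝ (Gc r) p :=
  diffAt_dot3 (diffAt_pd hU hr _ hp) (diffAt_pd hU hr _ hp)

include hind

lemma diffAt_Wc {p : ℝ × ℝ} (hp : p ∈ U) : DifferentiableAt ℝ (Wc r) p := by
  have h : DifferentiableAt ℝ (fun q => Ec r q * Gc r q - Fc r q ^ 2) p :=
    ((diffAt_Ec hU hr hp).mul (diffAt_Gc hU hr hp)).sub ((diffAt_Fc hU hr hp).pow 2)
  exact h.sqrt (EG_sub_sq_pos (hind p hp)).ne'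

omit hind in
lemma diffAt_cross {p : ℝ × ℝ} (hp : p ∈ U) :
    DifferentiableAt ℝ (fun q => crossProduct (pdu r q) (pdv r q)) p := by
  have h1 := diffAt_pd hU hr (1,0) hp
  have h2 := diffAt_pd hU hr (0,1) hp
  rw [show (fun q => crossProduct (pdu r q) (pdv r q)) = fun q =>
      ![pdu r q 1 * pdv r q 2 - pdu r q 2 * pdv r q 1,
        pdu r q 2 * pdv r q 0 - pdu r q 0 * pdv r q 2,
        pdu r q 0 * pdv r q 1 - pdu r q 1 * pdv r q 0] from funext fun q => cross_apply _ _]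
  rw [differentiableAt_pi]
  intro i
  have hcomp : ∀ (i : Fin 3), DifferentiableAt ℝ (fun q => pdu r q i) p ∧
      DifferentiableAt ℝ (fun q => pdv r q i) p :=
    fun i => ⟨diffAt_apply i h1, diffAt_apply i h2⟩
  fin_cases i <;>
    simp only [Matrix.cons_val_zero, Matrix.cons_val_one, Matrix.head_cons,
      Matrix.cons_val_two, Matrix.tail_cons] <;>
    exact ((hcomp _).1.mul (hcomp _).2).sub ((hcomp _).1.mul (hcomp _).2)

lemma diffAt_nc {p : ℝ × ℝ} (hp : p ∈ U) : DifferentiableAt ℝ (nc r) p := by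
  have h : DifferentiableAt ℝ (fun q => (Wc r q)⁻¹) p :=
    (diffAt_Wc hU hr hind hp).inv (Wc_pos (hind p hp)).ne'
  exact h.smul (diffAt_cross hU hr hp)

end Diff
end FTS

namespace FTS
open Matrix

attribute [local instance] Matrix.linftyOpNormedRing Matrix.linftyOpNormedAlgebra

/-- matrix with given rows -/
def Xof (a b c : Fin 3 → ℝ) : Matrix (Fin 3) (Fin 3) ℝ := Matrix.of ![a, b, c]

def XofL : ((Fin 3 → ℝ) × (Fin 3 → ℝ) × (Fin 3 → ℝ)) →L[ℝ] Matrix (Fin 3) (Fin 3) ℝ :=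
  LinearMap.toContinuousLinearMap
    { toFun := fun t => Xof t.1 t.2.1 t.2.2
      map_add' := by
        rintro ⟨a, b, c⟩ ⟨a', b', c'⟩
        ext i j
        fin_cases i <;> simp [Xof]
      map_smul' := by
        rintro m ⟨a, b, c⟩
        ext i j
        fin_cases i <;> simp [Xof] }

@[simp] lemma XofL_apply (a b c : Fin 3 → ℝ) : XofL (a, b, c) = Xof a b c := rfl

@[simp] lemma Xof_row0 (a b c : Fin 3 → ℝ) : Xof a b c 0 = a := rfl
@[simp] lemma Xof_row1 (a b c : Fin 3 → ℝ) : Xof a b c 1 = b := rfl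
@[simp] lemma Xof_row2 (a b c : Fin 3 → ℝ) : Xof a b c 2 = c := rfl

lemma mul_transpose_apply (A B : Matrix (Fin 3) (Fin 3) ℝ) (i j : Fin 3) :
    (A * Bᵀ) i j = dot3 (A i) (B j) := by
  simp [Matrix.mul_apply, dot3, Matrix.transpose_apply]

variable {U : Set (ℝ × ℝ)} {r : ℝ × ℝ → Fin 3 → ℝ}

/-- the moving frame matrix, rows `r_u, r_v, n` -/
def Xm (r : ℝ × ℝ → Fin 3 → ℝ) (p : ℝ × ℝ) : Matrix (Fin 3) (Fin 3) ℝ :=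
  Xof (pdu r p) (pdv r p) (nc r p)

/-- the Gram matrix of the frame -/
def Qof (e f g : ℝ) : Matrix (Fin 3) (Fin 3) ℝ := !![e, f, 0; f, g, 0; 0, 0, 1]

section MX
variable (hU : IsOpen U) (hr : ContDiffOn ℝ (⊤ : ℕ∞) r U)
  (hind : ∀ p ∈ U, LinearIndependent ℝ ![pdu r p, pdv r p])
include hU hr hind

lemma diffAt_Xm {p : ℝ × ℝ} (hp : p ∈ U) : DifferentiableAt ℝ (Xm r) p := by
  have h : DifferentiableAt ℝ
      (fun q => ((pdu r q, pdv r q, nc r q) : (Fin 3 → ℝ) × (Fin 3 → ℝ) × (Fin 3 → ℝ))) p :=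
    (diffAt_pd hU hr _ hp).prodMk ((diffAt_pd hU hr _ hp).prodMk (diffAt_nc hU hr hind hp))
  exact (XofL.differentiableAt).comp p h

lemma pd_Xm (w : ℝ × ℝ) {p : ℝ × ℝ} (hp : p ∈ U) :
    pd w (Xm r) p = Xof (pd w (pdu r) p) (pd w (pdv r) p) (pd w (nc r) p) := by
  have h : DifferentiableAt ℝ
      (fun q => ((pdu r q, pdv r q, nc r q) : (Fin 3 → ℝ) × (Fin 3 → ℝ) × (Fin 3 → ℝ))) p :=
    (diffAt_pd hU hr _ hp).prodMk ((diffAt_pd hU hr _ hp).prodMk (diffAt_nc hU hr hind hp))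
  have : Xm r = fun q => XofL (pdu r q, pdv r q, nc r q) := rfl
  rw [this]; erw [pd_clm w XofL h]
  have e : pd w (fun q => ((pdu r q, pdv r q, nc r q) :
      (Fin 3 → ℝ) × (Fin 3 → ℝ) × (Fin 3 → ℝ))) p
      = (pd w (pdu r) p, pd w (pdv r) p, pd w (nc r) p) := by
    have h1 : HasFDerivAt (pdu r) (fderiv ℝ (pdu r) p) p :=
      (show DifferentiableAt ℝ (pdu r) p from diffAt_pd hU hr _ hp).hasFDerivAt
    have h2 : HasFDerivAt (pdv r) (fderiv ℝ (pdv r) p) p :=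
      (show DifferentiableAt ℝ (pdv r) p from diffAt_pd hU hr _ hp).hasFDerivAt
    have h3 := (diffAt_nc hU hr hind hp).hasFDerivAt
    have := (h1.prodMk (h2.prodMk h3)).fderiv
    simp [pd, this]
  rw [e]
  rfl

omit hU hr hind in
lemma gram_Xm {p : ℝ × ℝ} (hind1 : LinearIndependent ℝ ![pdu r p, pdv r p]) :
    Xm r p * (Xm r p)ᵀ = Qof (Ec r p) (Fc r p) (Gc r p) := by
  ext i j
  fin_cases i <;> fin_cases j <;>
    rw [mul_transpose_apply] <;>
    simp [Xm, Qof, dot3_nc_pdu, dot3_nc_pdv, dot3_nc_nc hind1] <;>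
    first
      | rfl
      | (rw [dot3_comm]; first | rfl | rw [dot3_nc_pdu] | rw [dot3_nc_pdv])

omit hU hr hind in
lemma det_Xm {p : ℝ × ℝ} (hind1 : LinearIndependent ℝ ![pdu r p, pdv r p]) :
    (Xm r p).det = Wc r p := by
  have h1 : (Xm r p).det = dot3 (crossProduct (pdu r p) (pdv r p)) (nc r p) := by
    simp [Xm, Xof, Matrix.det_fin_three, cross_apply, dot3, Fin.sum_univ_three, nc]
    ring
  rw [h1, nc, dot3_comm, dot3_smul_left, dot3_cross_cross]
  have h2 := Wc_sq hind1
  have h3 := (Wc_pos hind1).ne'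
  rw [Ec, Gc, Fc] at h2
  rw [← h2]
  field_simp [pow_two]

omit hU hr hind in
lemma isUnit_Xm {p : ℝ × ℝ} (hind1 : LinearIndependent ℝ ![pdu r p, pdv r p]) :
    IsUnit (Xm r p) := by
  rw [Matrix.isUnit_iff_isUnit_det, det_Xm hind1, isUnit_iff_ne_zero]
  exact (Wc_pos hind1).ne'

end MX
end FTS

namespace FTS
open Matrix

attribute [local instance] Matrix.linftyOpNormedRing Matrix.linftyOpNormedAlgebra

/-- coefficient matrix for the `u`-derivative of the frame -/
def DmU (r : ℝ × ℝ → Fin 3 → ℝ) (p : ℝ × ℝ) : Matrix (Fin 3) (Fin 3) ℝ :=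
  !![pdu (Ec r) p / 2, pdu (Fc r) p - pdv (Ec r) p / 2, Lc r p;
     pdv (Ec r) p / 2, pdu (Gc r) p / 2, Mc r p;
     -Lc r p, -Mc r p, 0]

/-- coefficient matrix for the `v`-derivative of the frame -/
def DmV (r : ℝ × ℝ → Fin 3 → ℝ) (p : ℝ × ℝ) : Matrix (Fin 3) (Fin 3) ℝ :=
  !![pdv (Ec r) p / 2, pdu (Gc r) p / 2, Mc r p;
     pdv (Fc r) p - pdu (Gc r) p / 2, pdv (Gc r) p / 2, Nc r p;
     -Mc r p, -Nc r p, 0]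

variable {U : Set (ℝ × ℝ)} {r : ℝ × ℝ → Fin 3 → ℝ}

section Ids
variable (hU : IsOpen U) (hr : ContDiffOn ℝ (⊤ : ℕ∞) r U)
  (hind : ∀ p ∈ U, LinearIndependent ℝ ![pdu r p, pdv r p])
  {p : ℝ × ℝ} (hp : p ∈ U)
include hU hr hp

lemma pd_Ec (w : ℝ × ℝ) :
    pd w (Ec r) p = 2 * dot3 (pd w (pdu r) p) (pdu r p) := by
  have h := pd_dot3 (f := pdu r) (g := pdu r) w (diffAt_pd hU hr (1,0) hp) (diffAt_pd hU hr (1,0) hp)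
  rw [show Ec r = fun q => dot3 (pdu r q) (pdu r q) from rfl, h,
    dot3_comm (pdu r p) (pd w (pdu r) p)]
  ring

lemma pd_Gc (w : ℝ × ℝ) :
    pd w (Gc r) p = 2 * dot3 (pd w (pdv r) p) (pdv r p) := by
  have h := pd_dot3 (f := pdv r) (g := pdv r) w (diffAt_pd hU hr (0,1) hp) (diffAt_pd hU hr (0,1) hp)
  rw [show Gc r = fun q => dot3 (pdv r q) (pdv r q) from rfl, h,
    dot3_comm (pdv r p) (pd w (pdv r) p)]
  ring

lemma pd_Fc (w : ℝ × ℝ) :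
    pd w (Fc r) p = dot3 (pd w (pdu r) p) (pdv r p) + dot3 (pdu r p) (pd w (pdv r) p) := by
  have h := pd_dot3 (f := pdu r) (g := pdv r) w (diffAt_pd hU hr (1,0) hp) (diffAt_pd hU hr (0,1) hp)
  rw [show Fc r = fun q => dot3 (pdu r q) (pdv r q) from rfl, h]

lemma pd_mixed : pd (1,0) (pdv r) p = pd (0,1) (pdu r) p := pd_symm hU hr hp

include hind

lemma pd_nc_nc (w : ℝ × ℝ) :
    dot3 (pd w (nc r) p) (nc r p) = 0 := by
  have hzero : pd w (fun q => dot3 (nc r q) (nc r q)) p = 0 := by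
    have hev : (fun q => dot3 (nc r q) (nc r q)) =ᶠ[nhds p] fun _ => (1:ℝ) := by
      filter_upwards [hU.mem_nhds hp] with q hq
      exact dot3_nc_nc (hind q hq)
    have h2 : fderiv ℝ (fun q => dot3 (nc r q) (nc r q)) p
        = fderiv ℝ (fun _ => (1:ℝ)) p := hev.fderiv_eq
    rw [pd, h2, fderiv_fun_const]
    simp
  have h := pd_dot3 w (diffAt_nc hU hr hind hp) (diffAt_nc hU hr hind hp)
  rw [hzero] at h
  rw [dot3_comm (nc r p) (pd w (nc r) p)] at h
  linarith

lemma pd_nc_pdu (w : ℝ × ℝ) :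
    dot3 (pd w (nc r) p) (pdu r p) = - dot3 (pd w (pdu r) p) (nc r p) := by
  have hzero : pd w (fun q => dot3 (nc r q) (pdu r q)) p = 0 := by
    rw [show (fun q => dot3 (nc r q) (pdu r q)) = fun _ => (0:ℝ) from
      funext fun q => dot3_nc_pdu q]
    simp [pd]
  have h := pd_dot3 (f := nc r) (g := pdu r) w (diffAt_nc hU hr hind hp) (diffAt_pd hU hr (1,0) hp)
  rw [hzero] at h
  rw [dot3_comm (nc r p) (pd w (pdu r) p)] at h
  linarith

lemma pd_nc_pdv (w : ℝ × ℝ) :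
    dot3 (pd w (nc r) p) (pdv r p) = - dot3 (pd w (pdv r) p) (nc r p) := by
  have hzero : pd w (fun q => dot3 (nc r q) (pdv r q)) p = 0 := by
    rw [show (fun q => dot3 (nc r q) (pdv r q)) = fun _ => (0:ℝ) from
      funext fun q => dot3_nc_pdv q]
    simp [pd]
  have h := pd_dot3 (f := nc r) (g := pdv r) w (diffAt_nc hU hr hind hp) (diffAt_pd hU hr (0,1) hp)
  rw [hzero] at h
  rw [dot3_comm (nc r p) (pd w (pdv r) p)] at h
  linarith

lemma pdXmT_u : pd (1,0) (Xm r) p * (Xm r p)ᵀ = DmU r p := by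
  rw [pd_Xm hU hr hind _ hp]
  have e00 : dot3 (pd (1,0) (pdu r) p) (pdu r p) = pdu (Ec r) p / 2 := by
    rw [pdu_eq (Ec r), pd_Ec hU hr hp (1,0)]; ring
  have eV0 : dot3 (pd (0,1) (pdu r) p) (pdu r p) = pdv (Ec r) p / 2 := by
    rw [pdv_eq (Ec r), pd_Ec hU hr hp (0,1)]; ring
  have e01 : dot3 (pd (1,0) (pdu r) p) (pdv r p) = pdu (Fc r) p - pdv (Ec r) p / 2 := by
    have hF := pd_Fc hU hr hp (1,0)
    rw [pdu_eq (Fc r)] at *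
    rw [pd_mixed hU hr hp, dot3_comm (pdu r p)] at hF
    rw [eV0] at hF
    linarith
  have e02 : dot3 (pd (1,0) (pdu r) p) (nc r p) = Lc r p := rfl
  have e10 : dot3 (pd (1,0) (pdv r) p) (pdu r p) = pdv (Ec r) p / 2 := by
    rw [pd_mixed hU hr hp]; exact eV0
  have e11 : dot3 (pd (1,0) (pdv r) p) (pdv r p) = pdu (Gc r) p / 2 := by
    rw [pdu_eq (Gc r), pd_Gc hU hr hp (1,0)]; ring
  have e12 : dot3 (pd (1,0) (pdv r) p) (nc r p) = Mc r p := by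
    rw [pd_mixed hU hr hp]; rfl
  have e20 : dot3 (pd (1,0) (nc r) p) (pdu r p) = -Lc r p := by
    rw [pd_nc_pdu hU hr hind hp, e02]
  have e21 : dot3 (pd (1,0) (nc r) p) (pdv r p) = -Mc r p := by
    rw [pd_nc_pdv hU hr hind hp, e12]
  have e22 : dot3 (pd (1,0) (nc r) p) (nc r p) = 0 := pd_nc_nc hU hr hind hp _
  ext i j
  rw [mul_transpose_apply]
  fin_cases i <;> fin_cases j <;>
    simp only [Xof_row0, Xof_row1, Xof_row2, Xm, DmU, Matrix.cons_val', Matrix.cons_val_zero,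
      Matrix.cons_val_one, Matrix.head_cons, Matrix.empty_val', Matrix.cons_val_fin_one,
      Matrix.head_fin_const, Matrix.cons_val_two, Matrix.tail_cons, Matrix.of_apply,
      Fin.isValue] <;>
    first
      | exact e00 | exact e01 | exact e02 | exact e10 | exact e11 | exact e12
      | exact e20 | exact e21 | exact e22

lemma pdXmT_v : pd (0,1) (Xm r) p * (Xm r p)ᵀ = DmV r p := by
  rw [pd_Xm hU hr hind _ hp]
  have eV0 : dot3 (pd (0,1) (pdu r) p) (pdu r p) = pdv (Ec r) p / 2 := by
    rw [pdv_eq (Ec r), pd_Ec hU hr hp (0,1)]; ring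
  have e01 : dot3 (pd (0,1) (pdu r) p) (pdv r p) = pdu (Gc r) p / 2 := by
    rw [← pd_mixed hU hr hp, pdu_eq (Gc r), pd_Gc hU hr hp (1,0)]; ring
  have e02 : dot3 (pd (0,1) (pdu r) p) (nc r p) = Mc r p := rfl
  have e10 : dot3 (pd (0,1) (pdv r) p) (pdu r p)
      = pdv (Fc r) p - pdu (Gc r) p / 2 := by
    have hF := pd_Fc hU hr hp (0,1)
    rw [pdv_eq (Fc r)] at *
    rw [dot3_comm (pdu r p)] at hF
    rw [e01] at hF
    linarith
  have e11 : dot3 (pd (0,1) (pdv r) p) (pdv r p) = pdv (Gc r) p / 2 := by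
    rw [pdv_eq (Gc r), pd_Gc hU hr hp (0,1)]; ring
  have e12 : dot3 (pd (0,1) (pdv r) p) (nc r p) = Nc r p := rfl
  have e20 : dot3 (pd (0,1) (nc r) p) (pdu r p) = -Mc r p := by
    rw [pd_nc_pdu hU hr hind hp, e02]
  have e21 : dot3 (pd (0,1) (nc r) p) (pdv r p) = -Nc r p := by
    rw [pd_nc_pdv hU hr hind hp, e12]
  have e22 : dot3 (pd (0,1) (nc r) p) (nc r p) = 0 := pd_nc_nc hU hr hind hp _
  ext i j
  rw [mul_transpose_apply]
  fin_cases i <;> fin_cases j <;>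
    simp only [Xof_row0, Xof_row1, Xof_row2, Xm, DmV, Matrix.cons_val', Matrix.cons_val_zero,
      Matrix.cons_val_one, Matrix.head_cons, Matrix.empty_val', Matrix.cons_val_fin_one,
      Matrix.head_fin_const, Matrix.cons_val_two, Matrix.tail_cons, Matrix.of_apply,
      Fin.isValue] <;>
    first
      | exact eV0 | exact e01 | exact e02 | exact e10 | exact e11 | exact e12
      | exact e20 | exact e21 | exact e22

end Ids
end FTS

namespace FTS
open Matrix

attribute [local instance] Matrix.linftyOpNormedRing Matrix.linftyOpNormedAlgebra

section MatCalc
variable {A B : ℝ × ℝ → Matrix (Fin 3) (Fin 3) ℝ} {p : ℝ × ℝ}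

lemma pd_matmul (w : ℝ × ℝ) (hA : DifferentiableAt ℝ A p) (hB : DifferentiableAt ℝ B p) :
    pd w (fun q => A q * B q) p = pd w A p * B p + A p * pd w B p := by
  have h := (hA.hasFDerivAt.mul' hB.hasFDerivAt).fderiv
  rw [show (fun q => A q * B q) = A * B from rfl]
  simp only [pd, h, ContinuousLinearMap.add_apply, ContinuousLinearMap.smul_apply,
    ContinuousLinearMap.smulRight_apply, smul_eq_mul]
  rw [add_comm]
  rfl

lemma diffAt_matinv (hA : DifferentiableAt ℝ A p) (hu : IsUnit (A p)) :
    DifferentiableAt ℝ (fun q => Ring.inverse (A q)) p :=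
  DifferentiableAt.inverse hA hu

lemma pd_matinv (w : ℝ × ℝ) (hA : DifferentiableAt ℝ A p) (hu : IsUnit (A p)) :
    pd w (fun q => Ring.inverse (A q)) p = -((A p)⁻¹ * pd w A p * (A p)⁻¹) := by
  have hinv : HasFDerivAt Ring.inverse
      (-(ContinuousLinearMap.mulLeftRight ℝ _ ↑hu.unit⁻¹ ↑hu.unit⁻¹)) (A p) := by
    have := hasFDerivAt_ringInverse (𝕜 := ℝ) hu.unit
    rwa [hu.unit_spec] at this
  have h := (hinv.comp p hA.hasFDerivAt).fderiv
  have h2 : pd w (fun q => Ring.inverse (A q)) p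
      = -(ContinuousLinearMap.mulLeftRight ℝ _ (↑hu.unit⁻¹) (↑hu.unit⁻¹) (fderiv ℝ A p w)) := by
    rw [pd, show (fun q => Ring.inverse (A q)) = Ring.inverse ∘ A from rfl, h]
    rfl
  rw [h2, ContinuousLinearMap.mulLeftRight_apply,
    show (↑hu.unit⁻¹ : Matrix (Fin 3) (Fin 3) ℝ) = (A p)⁻¹ by
      rw [Matrix.coe_units_inv, hu.unit_spec]]
  rw [neg_inj, Matrix.mul_assoc, Matrix.mul_assoc]
  rfl

end MatCalc
end FTS

namespace FTS
open Matrix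

attribute [local instance] Matrix.linftyOpNormedRing Matrix.linftyOpNormedAlgebra

lemma pd_congr {U : Set (ℝ × ℝ)} (hU : IsOpen U) {f g : ℝ × ℝ → ℝ}
    (h : ∀ q ∈ U, f q = g q) {p : ℝ × ℝ} (hp : p ∈ U) (w : ℝ × ℝ) :
    pd w f p = pd w g p := by
  have hev : f =ᶠ[nhds p] g := by
    filter_upwards [hU.mem_nhds hp] with q hq using h q hq
  rw [pd, pd, hev.fderiv_eq]

lemma row_mul (M B : Matrix (Fin 3) (Fin 3) ℝ) (i : Fin 3) :
    (M * B) i = Bᵀ.mulVec (M i) := by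
  funext j
  simp [Matrix.mul_apply, Matrix.mulVec, dotProduct, mul_comm]

/-- `X⁻¹ = Xᵀ (X Xᵀ)⁻¹` for invertible `X` -/
lemma inv_eq_transpose_mul_gram (X : Matrix (Fin 3) (Fin 3) ℝ) (h : IsUnit X.det) :
    X⁻¹ = Xᵀ * (X * Xᵀ)⁻¹ := by
  have hQ : IsUnit (X * Xᵀ).det := by
    rw [Matrix.det_mul, Matrix.det_transpose]
    exact h.mul h
  refine Matrix.inv_eq_right_inv ?_
  rw [← Matrix.mul_assoc, Matrix.mul_nonsing_inv _ hQ]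

section Main
variable {U : Set (ℝ × ℝ)} {r₁ r₂ : ℝ × ℝ → Fin 3 → ℝ}
  (hU : IsOpen U)
  (hr₁ : ContDiffOn ℝ (⊤ : ℕ∞) r₁ U) (hr₂ : ContDiffOn ℝ (⊤ : ℕ∞) r₂ U)
  (hind₁ : ∀ p ∈ U, LinearIndependent ℝ ![pdu r₁ p, pdv r₁ p])
  (hind₂ : ∀ p ∈ U, LinearIndependent ℝ ![pdu r₂ p, pdv r₂ p])
  (hE : ∀ p ∈ U, Ec r₁ p = Ec r₂ p)
  (hF : ∀ p ∈ U, Fc r₁ p = Fc r₂ p)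
  (hG : ∀ p ∈ U, Gc r₁ p = Gc r₂ p)
  (hL : ∀ p ∈ U, Lc r₁ p = Lc r₂ p)
  (hM : ∀ p ∈ U, Mc r₁ p = Mc r₂ p)
  (hN : ∀ p ∈ U, Nc r₁ p = Nc r₂ p)

include hU hE hF hG hL hM in
lemma DmU_eq {p : ℝ × ℝ} (hp : p ∈ U) : DmU r₁ p = DmU r₂ p := by
  rw [DmU, DmU, hL p hp, hM p hp,
    pdu_eq (Ec r₁), pdu_eq (Fc r₁), pdu_eq (Gc r₁), pdv_eq (Ec r₁),
    pd_congr hU hE hp, pd_congr hU hF hp, pd_congr hU hG hp, pd_congr hU hE hp]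
  rfl

include hU hE hF hG hM hN in
lemma DmV_eq {p : ℝ × ℝ} (hp : p ∈ U) : DmV r₁ p = DmV r₂ p := by
  rw [DmV, DmV, hM p hp, hN p hp,
    pdu_eq (Gc r₁), pdv_eq (Ec r₁), pdv_eq (Fc r₁), pdv_eq (Gc r₁),
    pd_congr hU hE hp, pd_congr hU hF hp, pd_congr hU hG hp, pd_congr hU hG hp]
  rfl

include hind₁ hind₂ hE hF hG in
lemma gram_eq {p : ℝ × ℝ} (hp : p ∈ U) :
    Xm r₁ p * (Xm r₁ p)ᵀ = Xm r₂ p * (Xm r₂ p)ᵀ := by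
  rw [gram_Xm (hind₁ p hp), gram_Xm (hind₂ p hp), hE p hp, hF p hp, hG p hp]

include hU hind₁ hind₂ hE hF hG in
/-- the common coefficient matrix -/
lemma C_eq {p : ℝ × ℝ} (hp : p ∈ U) (w : ℝ × ℝ)
    (hDT : pd w (Xm r₁) p * (Xm r₁ p)ᵀ = pd w (Xm r₂) p * (Xm r₂ p)ᵀ) :
    pd w (Xm r₁) p * (Xm r₁ p)⁻¹ = pd w (Xm r₂) p * (Xm r₂ p)⁻¹ := by
  have h1 : IsUnit (Xm r₁ p).det := (Matrix.isUnit_iff_isUnit_det _).1 (isUnit_Xm (hind₁ p hp))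
  have h2 : IsUnit (Xm r₂ p).det := (Matrix.isUnit_iff_isUnit_det _).1 (isUnit_Xm (hind₂ p hp))
  rw [inv_eq_transpose_mul_gram _ h1, inv_eq_transpose_mul_gram _ h2,
    ← Matrix.mul_assoc, ← Matrix.mul_assoc, hDT,
    gram_eq hind₁ hind₂ hE hF hG hp]

end Main
end FTS

namespace FTS
open Matrix

attribute [local instance] Matrix.linftyOpNormedRing Matrix.linftyOpNormedAlgebra

lemma fderiv_eq_zero_of_pd {E : Type*} [NormedAddCommGroup E] [NormedSpace ℝ E]
    {f : ℝ × ℝ → E} {p : ℝ × ℝ}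
    (h1 : pd (1,0) f p = 0) (h2 : pd (0,1) f p = 0) : fderiv ℝ f p = 0 := by
  refine ContinuousLinearMap.ext fun w => ?_
  have hw : w = w.1 • ((1:ℝ),(0:ℝ)) + w.2 • ((0:ℝ),(1:ℝ)) := by
    ext <;> simp
  rw [ContinuousLinearMap.zero_apply, hw, map_add,
    (fderiv ℝ f p).map_smul, (fderiv ℝ f p).map_smul]
  rw [pd] at h1 h2
  rw [h1, h2, smul_zero, smul_zero, add_zero]

section Final
variable {U : Set (ℝ × ℝ)} {r₁ r₂ : ℝ × ℝ → Fin 3 → ℝ}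
  (hU : IsOpen U)
  (hr₁ : ContDiffOn ℝ (⊤ : ℕ∞) r₁ U) (hr₂ : ContDiffOn ℝ (⊤ : ℕ∞) r₂ U)
  (hind₁ : ∀ p ∈ U, LinearIndependent ℝ ![pdu r₁ p, pdv r₁ p])
  (hind₂ : ∀ p ∈ U, LinearIndependent ℝ ![pdu r₂ p, pdv r₂ p])
  (hE : ∀ p ∈ U, Ec r₁ p = Ec r₂ p)
  (hF : ∀ p ∈ U, Fc r₁ p = Fc r₂ p)
  (hG : ∀ p ∈ U, Gc r₁ p = Gc r₂ p)
  (hL : ∀ p ∈ U, Lc r₁ p = Lc r₂ p)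
  (hM : ∀ p ∈ U, Mc r₁ p = Mc r₂ p)
  (hN : ∀ p ∈ U, Nc r₁ p = Nc r₂ p)

include hU hr₁ hr₂ hind₁ hind₂ hE hF hG hL hM hN in
lemma Y_pd_zero {p : ℝ × ℝ} (hp : p ∈ U) :
    fderiv ℝ (fun q => Ring.inverse (Xm r₁ q) * Xm r₂ q) p = 0 := by
  have hdet1 : IsUnit (Xm r₁ p).det := (Matrix.isUnit_iff_isUnit_det _).1 (isUnit_Xm (hind₁ p hp))
  have hdet2 : IsUnit (Xm r₂ p).det := (Matrix.isUnit_iff_isUnit_det _).1 (isUnit_Xm (hind₂ p hp))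
  have hXd1 := diffAt_Xm hU hr₁ hind₁ hp
  have hXd2 := diffAt_Xm hU hr₂ hind₂ hp
  have hinvd := diffAt_matinv hXd1 (isUnit_Xm (hind₁ p hp))
  have key : ∀ w : ℝ × ℝ,
      pd w (Xm r₁) p * (Xm r₁ p)⁻¹ = pd w (Xm r₂) p * (Xm r₂ p)⁻¹ →
      pd w (fun q => Ring.inverse (Xm r₁ q) * Xm r₂ q) p = 0 := by
    intro w hC
    rw [pd_matmul w hinvd hXd2, pd_matinv w hXd1 (isUnit_Xm (hind₁ p hp)),
      ← Matrix.nonsing_inv_eq_ringInverse]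
    obtain ⟨C, h1, h2⟩ : ∃ C, pd w (Xm r₁) p = C * Xm r₁ p ∧ pd w (Xm r₂) p = C * Xm r₂ p := by
      refine ⟨pd w (Xm r₁) p * (Xm r₁ p)⁻¹, ?_, ?_⟩
      · rw [Matrix.mul_assoc, Matrix.nonsing_inv_mul _ hdet1, Matrix.mul_one]
      · rw [hC, Matrix.mul_assoc, Matrix.nonsing_inv_mul _ hdet2, Matrix.mul_one]
    rw [h1, h2]
    have e1 : (Xm r₁ p)⁻¹ * (C * Xm r₁ p) * (Xm r₁ p)⁻¹ = (Xm r₁ p)⁻¹ * C := by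
      rw [← Matrix.mul_assoc, Matrix.mul_assoc ((Xm r₁ p)⁻¹ * C) (Xm r₁ p) ((Xm r₁ p)⁻¹),
        Matrix.mul_nonsing_inv _ hdet1, Matrix.mul_one]
    rw [e1, ← Matrix.mul_assoc ((Xm r₁ p)⁻¹) C (Xm r₂ p), neg_mul,
      Matrix.mul_assoc ((Xm r₁ p)⁻¹) C (Xm r₂ p), neg_add_cancel]
  apply fderiv_eq_zero_of_pd
  · exact key (1,0) (C_eq hU hind₁ hind₂ hE hF hG hp _ (by
      rw [pdXmT_u hU hr₁ hind₁ hp, pdXmT_u hU hr₂ hind₂ hp,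
        DmU_eq hU hE hF hG hL hM hp]))
  · exact key (0,1) (C_eq hU hind₁ hind₂ hE hF hG hp _ (by
      rw [pdXmT_v hU hr₁ hind₁ hp, pdXmT_v hU hr₂ hind₂ hp,
        DmV_eq hU hE hF hG hM hN hp]))

end Final
end FTS

open FTS Matrix in
/-- uniqueness part of the fundamental theorem of surface theory:
two smooth immersed parametrized surfaces on a connected open set `U ⊆ ℝ²` with the
same first and second fundamental form coefficients are congruent via a rotation
`A ∈ SO(3)` and a translation `b ∈ ℝ³`. -/
theorem fundamental_theorem_surfaces_uniqueness
    (U : Set (ℝ × ℝ)) (hU : IsOpen U) (hUconn : IsConnected U)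
    (r₁ r₂ : ℝ × ℝ → Fin 3 → ℝ)
    (hr₁ : ContDiffOn ℝ (⊤ : ℕ∞) r₁ U) (hr₂ : ContDiffOn ℝ (⊤ : ℕ∞) r₂ U)
    (hind₁ : ∀ p ∈ U, LinearIndependent ℝ ![pdu r₁ p, pdv r₁ p])
    (hind₂ : ∀ p ∈ U, LinearIndependent ℝ ![pdu r₂ p, pdv r₂ p])
    (hE : ∀ p ∈ U, Ec r₁ p = Ec r₂ p)
    (hF : ∀ p ∈ U, Fc r₁ p = Fc r₂ p)
    (hG : ∀ p ∈ U, Gc r₁ p = Gc r₂ p)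
    (hL : ∀ p ∈ U, Lc r₁ p = Lc r₂ p)
    (hM : ∀ p ∈ U, Mc r₁ p = Mc r₂ p)
    (hN : ∀ p ∈ U, Nc r₁ p = Nc r₂ p) :
    ∃ A : Matrix (Fin 3) (Fin 3) ℝ,
      A ∈ Matrix.specialOrthogonalGroup (Fin 3) ℝ ∧
        ∃ b : Fin 3 → ℝ, ∀ p ∈ U, r₂ p = A.mulVec (r₁ p) + b := by

  letI : NormedRing (Matrix (Fin 3) (Fin 3) ℝ) := Matrix.linftyOpNormedRing
  letI : NormedAlgebra ℝ (Matrix (Fin 3) (Fin 3) ℝ) := Matrix.linftyOpNormedAlgebra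
  obtain ⟨p₀, hp₀⟩ := hUconn.nonempty
  set Y : ℝ × ℝ → Matrix (Fin 3) (Fin 3) ℝ :=
    fun q => Ring.inverse (Xm r₁ q) * Xm r₂ q with hYdef
  have hdet1 : ∀ p ∈ U, IsUnit (Xm r₁ p).det :=
    fun p hp => (Matrix.isUnit_iff_isUnit_det _).1 (isUnit_Xm (hind₁ p hp))
  have hdet2 : ∀ p ∈ U, IsUnit (Xm r₂ p).det :=
    fun p hp => (Matrix.isUnit_iff_isUnit_det _).1 (isUnit_Xm (hind₂ p hp))
  have hYdiff : ∀ p ∈ U, DifferentiableAt ℝ Y p := fun p hp =>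
    (diffAt_matinv (diffAt_Xm hU hr₁ hind₁ hp) (isUnit_Xm (hind₁ p hp))).mul
      (diffAt_Xm hU hr₂ hind₂ hp)
  have hYzero : ∀ p ∈ U, fderiv ℝ Y p = 0 := fun p hp =>
    Y_pd_zero hU hr₁ hr₂ hind₁ hind₂ hE hF hG hL hM hN hp
  have hYconst := const_of_pd_zero hU hUconn.isPreconnected hYdiff hYzero
  set B : Matrix (Fin 3) (Fin 3) ℝ := Y p₀ with hBdef
  have hB' : B = (Xm r₁ p₀)⁻¹ * Xm r₂ p₀ := by
    rw [hBdef, hYdef, Matrix.nonsing_inv_eq_ringInverse]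
  -- X₂ = X₁ B on U
  have hXB : ∀ p ∈ U, Xm r₂ p = Xm r₁ p * B := by
    intro p hp
    have h : Y p = B := hYconst p hp p₀ hp₀
    calc Xm r₂ p = (Xm r₁ p * (Xm r₁ p)⁻¹) * Xm r₂ p := by
          rw [Matrix.mul_nonsing_inv _ (hdet1 p hp), Matrix.one_mul]
      _ = Xm r₁ p * Y p := by
          rw [Matrix.mul_assoc, hYdef, Matrix.nonsing_inv_eq_ringInverse]
      _ = Xm r₁ p * B := by rw [h]
  -- rows
  have hrow_u : ∀ p ∈ U, pdu r₂ p = Bᵀ.mulVec (pdu r₁ p) := by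
    intro p hp
    have := congrFun (hXB p hp) 0
    rw [row_mul] at this
    exact this
  have hrow_v : ∀ p ∈ U, pdv r₂ p = Bᵀ.mulVec (pdv r₁ p) := by
    intro p hp
    have := congrFun (hXB p hp) 1
    rw [row_mul] at this
    exact this
  -- the translation part
  set T : (Fin 3 → ℝ) →L[ℝ] (Fin 3 → ℝ) :=
    LinearMap.toContinuousLinearMap (Matrix.mulVecLin Bᵀ) with hTdef
  have hT : ∀ x, T x = Bᵀ.mulVec x := fun x => rfl
  set g : ℝ × ℝ → Fin 3 → ℝ := fun q => r₂ q - T (r₁ q) with hgdef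
  have hgdiff : ∀ p ∈ U, DifferentiableAt ℝ g p := fun p hp =>
    (diffAt_of_contDiffOn hU hr₂ hp).sub
      ((T.differentiableAt).comp p (diffAt_of_contDiffOn hU hr₁ hp))
  have hgpd : ∀ p ∈ U, ∀ w : ℝ × ℝ, pd w g p = pd w r₂ p - T (pd w r₁ p) := by
    intro p hp w
    rw [hgdef]
    rw [pd_sub (f := r₂) (g := fun q => T (r₁ q)) w (diffAt_of_contDiffOn hU hr₂ hp)
      ((T.differentiableAt).comp p (diffAt_of_contDiffOn hU hr₁ hp)),
      pd_clm (f := r₁) w T (diffAt_of_contDiffOn hU hr₁ hp)]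
  have hgzero : ∀ p ∈ U, fderiv ℝ g p = 0 := by
    intro p hp
    apply fderiv_eq_zero_of_pd
    · rw [hgpd p hp (1,0)]
      rw [show pd (1,0) r₂ p = pdu r₂ p from rfl, show pd (1,0) r₁ p = pdu r₁ p from rfl,
        hT, hrow_u p hp, sub_self]
    · rw [hgpd p hp (0,1)]
      rw [show pd (0,1) r₂ p = pdv r₂ p from rfl, show pd (0,1) r₁ p = pdv r₁ p from rfl,
        hT, hrow_v p hp, sub_self]
  have hgconst := const_of_pd_zero hU hUconn.isPreconnected hgdiff hgzero
  refine ⟨Bᵀ, ?_, g p₀, ?_⟩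
  · -- SO(3)
    have hQ : Xm r₂ p₀ * (Xm r₂ p₀)ᵀ = Xm r₁ p₀ * (Xm r₁ p₀)ᵀ :=
      (gram_eq hind₁ hind₂ hE hF hG hp₀).symm
    have hdet1T : IsUnit (Xm r₁ p₀)ᵀ.det := by
      rw [Matrix.det_transpose]; exact hdet1 p₀ hp₀
    have hBBT : B * Bᵀ = 1 := by
      rw [hB', Matrix.transpose_mul, Matrix.transpose_nonsing_inv]
      calc (Xm r₁ p₀)⁻¹ * Xm r₂ p₀ * ((Xm r₂ p₀)ᵀ * (Xm r₁ p₀)ᵀ⁻¹)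
          = (Xm r₁ p₀)⁻¹ * (Xm r₂ p₀ * (Xm r₂ p₀)ᵀ) * (Xm r₁ p₀)ᵀ⁻¹ := by
            rw [Matrix.mul_assoc, Matrix.mul_assoc, Matrix.mul_assoc]
        _ = (Xm r₁ p₀)⁻¹ * (Xm r₁ p₀ * (Xm r₁ p₀)ᵀ) * (Xm r₁ p₀)ᵀ⁻¹ := by rw [hQ]
        _ = ((Xm r₁ p₀)⁻¹ * Xm r₁ p₀) * ((Xm r₁ p₀)ᵀ * (Xm r₁ p₀)ᵀ⁻¹) := by
            rw [Matrix.mul_assoc, Matrix.mul_assoc, Matrix.mul_assoc]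
        _ = 1 := by
            rw [Matrix.nonsing_inv_mul _ (hdet1 p₀ hp₀), Matrix.mul_nonsing_inv _ hdet1T,
              Matrix.one_mul]
    rw [Matrix.mem_specialOrthogonalGroup_iff]
    constructor
    · rw [Matrix.mem_orthogonalGroup_iff]
      rw [Matrix.transpose_transpose]
      exact mul_eq_one_comm.1 hBBT
    · have hW : Wc r₁ p₀ = Wc r₂ p₀ := by
        rw [Wc, Wc, hE p₀ hp₀, hF p₀ hp₀, hG p₀ hp₀]
      rw [Matrix.det_transpose, hB', Matrix.det_mul, Matrix.det_nonsing_inv,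
        det_Xm (hind₁ p₀ hp₀), det_Xm (hind₂ p₀ hp₀), ← hW, Ring.inverse_eq_inv]
      exact inv_mul_cancel₀ (Wc_pos (hind₁ p₀ hp₀)).ne'
  · intro p hp
    have h : g p = g p₀ := hgconst p hp p₀ hp₀
    rw [hgdef] at h
    simp only at h
    rw [hT] at h
    rw [← sub_eq_iff_eq_add'.1 h]

end
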